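/- Let T ∈ (0,∞), d ∈ ℕ, let O ⊆ ℝ^d be an open set, let V : (0,T) × O → (0,∞) be twice continuously differentiable, let G : (0,T) × O × ℝ × ℝ^d × S_d → ℝ be degenerate elliptic, and let u : (0,T) × O → ℝ be a viscosity subsolution of ∂u/∂t (t,x) − G(t,x, u(t,x), (∇_x u)(t,x), (Hess_x u)(t,x)) = 0. Define G̃ : (0,T) × O × ℝ × ℝ^d × S_d → ℝ by G̃(t,x,r,p,A) := (1/V(t,x)) · G( t, x, r·V(t,x), p·V(t,x) + r·(∇_x V)(t,x), A·V(t,x) + p·((∇_x V)(t,x))ᵀ + (∇_x V)(t,x)·pᵀ + r·(Hess_x V)(t,x) ) − r · (∂V/∂t)(t,x) / V(t,x). Then G̃ is degenerate elliptic, and the function ũ : (0,T) × O → ℝ defined by ũ(t,x) := u(t,x)/V(t,x) is a viscosity subsolution of ∂ũ/∂t (t,x) − G̃(t,x, ũ(t,x), (∇_x ũ)(t,x), (Hess_x ũ)(t,x)) = 0. -/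

import Mathlib

open Real

/-- The time derivative `∂φ/∂t` of a function `φ : ℝ × ℝ^d → ℝ` of time and space. -/
noncomputable def timeDeriv {d : ℕ} (φ : ℝ × EuclideanSpace ℝ (Fin d) → ℝ)
    (y : ℝ × EuclideanSpace ℝ (Fin d)) : ℝ :=
  fderiv ℝ φ y (1, 0)

/-- The spatial gradient `∇ₓφ` of a function `φ : ℝ × ℝ^d → ℝ` of time and space. -/
noncomputable def spaceGrad {d : ℕ} (φ : ℝ × EuclideanSpace ℝ (Fin d) → ℝ)
    (y : ℝ × EuclideanSpace ℝ (Fin d)) : EuclideanSpace ℝ (Fin d) :=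
  WithLp.toLp 2 (fun i => fderiv ℝ φ y (0, EuclideanSpace.single i 1))

/-- The spatial Hessian `Hessₓφ` of a function `φ : ℝ × ℝ^d → ℝ` of time and space. -/
noncomputable def spaceHess {d : ℕ} (φ : ℝ × EuclideanSpace ℝ (Fin d) → ℝ)
    (y : ℝ × EuclideanSpace ℝ (Fin d)) : Matrix (Fin d) (Fin d) ℝ :=
  Matrix.of fun i j =>
    fderiv ℝ (fun z => fderiv ℝ φ z (0, EuclideanSpace.single j 1)) y
      (0, EuclideanSpace.single i 1)

/-- `G : (0,T) × O × ℝ × ℝ^d × S_d → ℝ` is degenerate elliptic if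
`G(t,x,r,p,A) ≤ G(t,x,r,p,B)` whenever `A ≤ B` (i.e. `B - A` is positive
semidefinite). -/
def ParabolicDegenerateElliptic {d : ℕ} (T : ℝ) (O : Set (EuclideanSpace ℝ (Fin d)))
    (G : ℝ → EuclideanSpace ℝ (Fin d) → ℝ → EuclideanSpace ℝ (Fin d) →
      Matrix (Fin d) (Fin d) ℝ → ℝ) : Prop :=
  ∀ t ∈ Set.Ioo 0 T, ∀ x ∈ O, ∀ (r : ℝ) (p : EuclideanSpace ℝ (Fin d))
    (A B : Matrix (Fin d) (Fin d) ℝ),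
    A.IsSymm → B.IsSymm → (B - A).PosSemidef → G t x r p A ≤ G t x r p B

/-- `u : (0,T) × O → ℝ` is a viscosity subsolution of
`∂u/∂t − G(t, x, u, ∇ₓu, Hessₓu) = 0`, i.e. a viscosity subsolution of `F = 0` on the
open set `(0,T) × O ⊆ ℝ^{1+d}`, where `F((t,x), r, (q,p), M) = q − G(t,x,r,p,A)` and
only the time component `q` of the gradient variable, the space components `p`, and
the spatial block `A` of the Hessian variable `M` enter `F`: `u` is upper
semicontinuous on `(0,T) × O` and for every `C²` test function `φ` on `(0,T) × O`
with `φ(y) = u(y)` and `φ ≥ u`, `∂φ/∂t(y) − G(y, φ(y), ∇ₓφ(y), Hessₓφ(y)) ≤ 0`. -/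
def IsParabolicViscositySubsolution {d : ℕ} (T : ℝ)
    (O : Set (EuclideanSpace ℝ (Fin d)))
    (G : ℝ → EuclideanSpace ℝ (Fin d) → ℝ → EuclideanSpace ℝ (Fin d) →
      Matrix (Fin d) (Fin d) ℝ → ℝ)
    (u : ℝ → EuclideanSpace ℝ (Fin d) → ℝ) : Prop :=
  UpperSemicontinuousOn (fun y : ℝ × EuclideanSpace ℝ (Fin d) => u y.1 y.2)
      (Set.Ioo 0 T ×ˢ O) ∧
    ∀ φ : ℝ × EuclideanSpace ℝ (Fin d) → ℝ, ContDiffOn ℝ 2 φ (Set.Ioo 0 T ×ˢ O) →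
      ∀ y ∈ Set.Ioo 0 T ×ˢ O, φ y = u y.1 y.2 →
        (∀ z ∈ Set.Ioo 0 T ×ˢ O, u z.1 z.2 ≤ φ z) →
          timeDeriv φ y - G y.1 y.2 (φ y) (spaceGrad φ y) (spaceHess φ y) ≤ 0

/-- `u : (0,T) × O → ℝ` is a viscosity supersolution of
`∂u/∂t − G(t, x, u, ∇ₓu, Hessₓu) = 0`; see `IsParabolicViscositySubsolution`. -/
def IsParabolicViscositySupersolution {d : ℕ} (T : ℝ)
    (O : Set (EuclideanSpace ℝ (Fin d)))
    (G : ℝ → EuclideanSpace ℝ (Fin d) → ℝ → EuclideanSpace ℝ (Fin d) →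
      Matrix (Fin d) (Fin d) ℝ → ℝ)
    (u : ℝ → EuclideanSpace ℝ (Fin d) → ℝ) : Prop :=
  LowerSemicontinuousOn (fun y : ℝ × EuclideanSpace ℝ (Fin d) => u y.1 y.2)
      (Set.Ioo 0 T ×ˢ O) ∧
    ∀ φ : ℝ × EuclideanSpace ℝ (Fin d) → ℝ, ContDiffOn ℝ 2 φ (Set.Ioo 0 T ×ˢ O) →
      ∀ y ∈ Set.Ioo 0 T ×ˢ O, φ y = u y.1 y.2 →
        (∀ z ∈ Set.Ioo 0 T ×ˢ O, φ z ≤ u z.1 z.2) →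
          0 ≤ timeDeriv φ y - G y.1 y.2 (φ y) (spaceGrad φ y) (spaceHess φ y)

/-- `u : (0,T) × O → ℝ` is a viscosity solution of
`∂u/∂t − G(t, x, u, ∇ₓu, Hessₓu) = 0` if it is both a viscosity subsolution and a
viscosity supersolution; see `IsParabolicViscositySubsolution`. -/
def IsParabolicViscositySolution {d : ℕ} (T : ℝ)
    (O : Set (EuclideanSpace ℝ (Fin d)))
    (G : ℝ → EuclideanSpace ℝ (Fin d) → ℝ → EuclideanSpace ℝ (Fin d) →
      Matrix (Fin d) (Fin d) ℝ → ℝ)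
    (u : ℝ → EuclideanSpace ℝ (Fin d) → ℝ) : Prop :=
  IsParabolicViscositySubsolution T O G u ∧ IsParabolicViscositySupersolution T O G u


section Helpers

variable {d : ℕ}

/-- Second directional derivative in terms of the derivative of the derivative. -/
lemma fderiv_fderiv_apply {f : ℝ × EuclideanSpace ℝ (Fin d) → ℝ}
    {y : ℝ × EuclideanSpace ℝ (Fin d)}
    (hF : DifferentiableAt ℝ (fderiv ℝ f) y) (v w : ℝ × EuclideanSpace ℝ (Fin d)) :
    fderiv ℝ (fun z => fderiv ℝ f z w) y v = fderiv ℝ (fderiv ℝ f) y v w := by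
  have h := fderiv_clm_apply hF (differentiableAt_const w)
  rw [show (fun z => fderiv ℝ f z w) = (fun z => (fderiv ℝ f z) w) from rfl, h]
  simp

/-- A nonnegative scalar multiple of a real positive semidefinite matrix is
positive semidefinite. -/
lemma posSemidef_smul_of_nonneg {A : Matrix (Fin d) (Fin d) ℝ} (hA : A.PosSemidef)
    {c : ℝ} (hc : 0 ≤ c) : (c • A).PosSemidef := by
  refine ⟨?_, fun x => ?_⟩
  · unfold Matrix.IsHermitian
    rw [Matrix.conjTranspose_smul, hA.1]
    simp
  · have h := hA.2 x
    exact (hA.smul hc).2 x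

end Helpers

/-- scaling of viscosity subsolutions: if `u` is a viscosity
subsolution of `∂u/∂t − G(t,x,u,∇ₓu,Hessₓu) = 0` on `(0,T) × O`, `V : (0,T) × O → (0,∞)`
is `C²`, and `G̃` is defined from `G` and `V` by the displayed formula, then `G̃` is
degenerate elliptic and `ũ = u/V` is a viscosity subsolution of
`∂ũ/∂t − G̃(t,x,ũ,∇ₓũ,Hessₓũ) = 0`. -/
theorem scaling_of_viscosity_subsolutions
    {d : ℕ} (hd : 0 < d) (T : ℝ) (hT : 0 < T)
    (O : Set (EuclideanSpace ℝ (Fin d))) (hO : IsOpen O)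
    (V : ℝ → EuclideanSpace ℝ (Fin d) → ℝ)
    (hVpos : ∀ t ∈ Set.Ioo 0 T, ∀ x ∈ O, 0 < V t x)
    (hVC2 : ContDiffOn ℝ 2 (fun y : ℝ × EuclideanSpace ℝ (Fin d) => V y.1 y.2)
      (Set.Ioo 0 T ×ˢ O))
    (G Gt : ℝ → EuclideanSpace ℝ (Fin d) → ℝ → EuclideanSpace ℝ (Fin d) →
      Matrix (Fin d) (Fin d) ℝ → ℝ)
    (hG : ParabolicDegenerateElliptic T O G)
    (u : ℝ → EuclideanSpace ℝ (Fin d) → ℝ)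
    (hsub : IsParabolicViscositySubsolution T O G u)
    (hGt : ∀ t ∈ Set.Ioo 0 T, ∀ x ∈ O, ∀ (r : ℝ) (p : EuclideanSpace ℝ (Fin d))
      (A : Matrix (Fin d) (Fin d) ℝ),
      Gt t x r p A =
        (1 / V t x) * G t x (r * V t x)
          (V t x • p +
            r • spaceGrad (fun y : ℝ × EuclideanSpace ℝ (Fin d) => V y.1 y.2) (t, x))
          (V t x • A +
            Matrix.of (fun i j =>
              p i * spaceGrad (fun y : ℝ × EuclideanSpace ℝ (Fin d) => V y.1 y.2) (t, x) j +
              spaceGrad (fun y : ℝ × EuclideanSpace ℝ (Fin d) => V y.1 y.2) (t, x) i * p j) +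
            r • spaceHess (fun y : ℝ × EuclideanSpace ℝ (Fin d) => V y.1 y.2) (t, x)) -
        r * (timeDeriv (fun y : ℝ × EuclideanSpace ℝ (Fin d) => V y.1 y.2) (t, x) / V t x)) :
    ParabolicDegenerateElliptic T O Gt ∧
      IsParabolicViscositySubsolution T O Gt (fun t x => u t x / V t x) := by
  set W : ℝ × EuclideanSpace ℝ (Fin d) → ℝ := fun y => V y.1 y.2 with hWdef
  set U : Set (ℝ × EuclideanSpace ℝ (Fin d)) := Set.Ioo 0 T ×ˢ O with hUdef
  have hUo : IsOpen U := isOpen_Ioo.prod hO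
  have hWpos : ∀ z ∈ U, 0 < W z := fun z hz => hVpos z.1 hz.1 z.2 hz.2
  -- differentiability of the derivative of W (and of any C² function) on U
  have hWfd : ∀ y ∈ U, DifferentiableAt ℝ (fderiv ℝ W) y := by
    intro y hy
    have h1 : ContDiffOn ℝ 1 (fderiv ℝ W) U := hVC2.fderiv_of_isOpen hUo (by norm_num)
    exact (h1.differentiableOn (by norm_num)).differentiableAt (hUo.mem_nhds hy)
  have hWd : ∀ y ∈ U, DifferentiableAt ℝ W y := by
    intro y hy
    exact ((hVC2 y hy).contDiffAt (hUo.mem_nhds hy)).differentiableAt (by norm_num)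
  constructor
  · -- degenerate ellipticity of Gt
    intro t ht x hx r p A B hA hB hAB
    have hy : ((t, x) : ℝ × EuclideanSpace ℝ (Fin d)) ∈ U := ⟨ht, hx⟩
    have hV : 0 < V t x := hVpos t ht x hx
    have hWat : ContDiffAt ℝ 2 W (t, x) := (hVC2 _ hy).contDiffAt (hUo.mem_nhds hy)
    have hF := hWfd (t, x) hy
    have hsym : (spaceHess W (t, x)).IsSymm := by
      unfold Matrix.IsSymm
      ext i j
      simp only [Matrix.transpose_apply, spaceHess, Matrix.of_apply]
      rw [fderiv_fderiv_apply hF, fderiv_fderiv_apply hF]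
      exact (hWat.isSymmSndFDerivAt (by simp)) _ _
    have hSsym : (Matrix.of (fun i j =>
        p i * spaceGrad W (t, x) j + spaceGrad W (t, x) i * p j)).IsSymm := by
      unfold Matrix.IsSymm
      ext i j
      simp only [Matrix.transpose_apply, Matrix.of_apply]
      ring
    rw [hGt t ht x hx r p A, hGt t ht x hx r p B]
    apply sub_le_sub_right
    apply mul_le_mul_of_nonneg_left _ (by positivity)
    apply hG t ht x hx _ _ _ _ ((((hA.smul _).add hSsym).add (hsym.smul _)))
      ((((hB.smul _).add hSsym).add (hsym.smul _)))
    have heq : (V t x • B + Matrix.of (fun i j =>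
          p i * spaceGrad W (t, x) j + spaceGrad W (t, x) i * p j) +
          r • spaceHess W (t, x)) -
        (V t x • A + Matrix.of (fun i j =>
          p i * spaceGrad W (t, x) j + spaceGrad W (t, x) i * p j) +
          r • spaceHess W (t, x)) = V t x • (B - A) := by
      rw [smul_sub]; abel
    rw [heq]
    exact posSemidef_smul_of_nonneg hAB hV.le
  · -- the scaled function is a viscosity subsolution
    obtain ⟨husc, hvisc⟩ := hsub
    constructor
    · -- upper semicontinuity
      intro z hz c hc
      have hVz : 0 < W z := hWpos z hz
      have hcz : u z.1 z.2 + -(c * W z) < 0 := by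
        have := (div_lt_iff₀ hVz).mp hc
        linarith
      have hWc : ContinuousWithinAt W U z := hVC2.continuousOn z hz
      have husc' : UpperSemicontinuousWithinAt
          (fun w : ℝ × EuclideanSpace ℝ (Fin d) => u w.1 w.2 + -(c * W w)) U z :=
        UpperSemicontinuousWithinAt.add (husc z hz) (((continuousWithinAt_const.mul hWc).neg).upperSemicontinuousWithinAt)
      filter_upwards [husc' 0 hcz, self_mem_nhdsWithin] with w hw hwU
      have hVw : 0 < W w := hWpos w hwU
      exact (div_lt_iff₀ hVw).mpr (by linarith)
    · -- test function condition
      intro φ hφ y hy hφy hge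
      have hVy : 0 < W y := hWpos y hy
      set ψ : ℝ × EuclideanSpace ℝ (Fin d) → ℝ := fun z => φ z * W z with hψdef
      have hψC2 : ContDiffOn ℝ 2 ψ U := hφ.mul hVC2
      have hψy : ψ y = u y.1 y.2 := by
        simp only [hψdef, hφy]
        exact div_mul_cancel₀ _ hVy.ne'
      have hψge : ∀ z ∈ U, u z.1 z.2 ≤ ψ z := by
        intro z hz
        have := hge z hz
        exact (div_le_iff₀ (hWpos z hz)).mp this
      have key := hvisc ψ hψC2 y hy hψy hψge
      -- differentiability facts
      have hφd : ∀ z ∈ U, DifferentiableAt ℝ φ z := fun z hz =>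
        ((hφ z hz).contDiffAt (hUo.mem_nhds hz)).differentiableAt (by norm_num)
      have hφfd : DifferentiableAt ℝ (fderiv ℝ φ) y := by
        have h1 : ContDiffOn ℝ 1 (fderiv ℝ φ) U := hφ.fderiv_of_isOpen hUo (by norm_num)
        exact (h1.differentiableOn (by norm_num)).differentiableAt (hUo.mem_nhds hy)
      have hWfdy := hWfd y hy
      -- product rule, eventually near y
      have hev : ∀ᶠ z in nhds y,
          fderiv ℝ ψ z = φ z • fderiv ℝ W z + W z • fderiv ℝ φ z := by
        filter_upwards [hUo.mem_nhds hy] with z hz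
        exact fderiv_mul (hφd z hz) (hWd z hz)
      have hdy := hev.self_of_nhds
      -- first derivative evaluations
      have happ : ∀ v, fderiv ℝ ψ y v = φ y * fderiv ℝ W y v + W y * fderiv ℝ φ y v := by
        intro v
        rw [hdy]
        simp [smul_eq_mul]
      -- time derivative
      have e4 : timeDeriv ψ y = W y * timeDeriv φ y + φ y * timeDeriv W y := by
        simp only [timeDeriv]
        rw [happ]
        ring
      -- gradient
      have e2 : spaceGrad ψ y =
          W y • spaceGrad φ y + φ y • spaceGrad W y := by
        ext i
        simp only [spaceGrad, PiLp.add_apply, PiLp.smul_apply, smul_eq_mul, PiLp.toLp_apply]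
        rw [happ]
        ring
      -- Hessian
      have e3 : spaceHess ψ y =
          W y • spaceHess φ y +
            Matrix.of (fun i j =>
              spaceGrad φ y i * spaceGrad W y j +
              spaceGrad W y i * spaceGrad φ y j) +
            φ y • spaceHess W y := by
        ext i j
        have hevj : (fun z => fderiv ℝ ψ z (0, EuclideanSpace.single j 1)) =ᶠ[nhds y]
            (fun z => φ z * fderiv ℝ W z (0, EuclideanSpace.single j 1) +
              W z * fderiv ℝ φ z (0, EuclideanSpace.single j 1)) := by
          filter_upwards [hev] with z hz
          rw [hz]
          simp [smul_eq_mul]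
        have hWj : DifferentiableAt ℝ
            (fun z => fderiv ℝ W z (0, EuclideanSpace.single j 1)) y :=
          hWfdy.clm_apply (differentiableAt_const _)
        have hφj : DifferentiableAt ℝ
            (fun z => fderiv ℝ φ z (0, EuclideanSpace.single j 1)) y :=
          hφfd.clm_apply (differentiableAt_const _)
        have h1 : spaceHess ψ y i j =
            fderiv ℝ (fun z => φ z * fderiv ℝ W z (0, EuclideanSpace.single j 1) +
              W z * fderiv ℝ φ z (0, EuclideanSpace.single j 1)) y
              (0, EuclideanSpace.single i 1) := by
          simp only [spaceHess, Matrix.of_apply]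
          rw [hevj.fderiv_eq]
        rw [h1, fderiv_fun_add (f := fun z => φ z * fderiv ℝ W z (0, EuclideanSpace.single j 1))
          (g := fun z => W z * fderiv ℝ φ z (0, EuclideanSpace.single j 1))
          ((hφd y hy).mul hWj) ((hWd y hy).mul hφj),
          fderiv_fun_mul (hφd y hy) hWj, fderiv_fun_mul (hWd y hy) hφj]
        simp only [Matrix.add_apply, Matrix.smul_apply, Matrix.of_apply, smul_eq_mul,
          ContinuousLinearMap.add_apply, ContinuousLinearMap.coe_smul', Pi.smul_apply,
          spaceHess, spaceGrad, PiLp.toLp_apply]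
        ring
      -- rewrite the goal via hGt and the computations above
      rw [hGt y.1 hy.1 y.2 hy.2]
      have hyy : ((y.1, y.2) : ℝ × EuclideanSpace ℝ (Fin d)) = y := rfl
      rw [hyy]
      rw [show V y.1 y.2 = W y from rfl]
      rw [show φ y * W y = ψ y from rfl, ← e2, ← e3]
      have h5 : timeDeriv φ y -
          ((1 / W y) * G y.1 y.2 (ψ y) (spaceGrad ψ y) (spaceHess ψ y) -
            φ y * (timeDeriv W y / W y)) =
          (1 / W y) * (timeDeriv ψ y -
            G y.1 y.2 (ψ y) (spaceGrad ψ y) (spaceHess ψ y)) := by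
        rw [e4]
        field_simp
        ring
      rw [h5]
      exact mul_nonpos_of_nonneg_of_nonpos (by positivity) key
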